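/- If there exists p ∈ ℝ^K with all components strictly positive satisfying [I − diag(γ)B] p ≥ diag(γ)τ componentwise, then there exists a unique p* ∈ ℝ^K satisfying [I − diag(γ)B] p* = diag(γ)τ, and this p* satisfies 0 < p* ≤ p componentwise. -/

import Mathlib

open Matrix BigOperators

/-- The normalized interference matrix `B`: `b_{ij} = A_{ij}/A_{ii}` for `i ≠ j`,
`b_{ii} = 0`. -/
noncomputable def Bmat {K : ℕ} (A : Matrix (Fin K) (Fin K) ℝ) :
    Matrix (Fin K) (Fin K) ℝ :=
  Matrix.of fun i j => if i = j then 0 else A i j / A i i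

/-- The normalized noise vector `τ`: `τ_i = C_{ii} σ² / A_{ii}`. -/
noncomputable def tauVec {K : ℕ} (A : Matrix (Fin K) (Fin K) ℝ) (C : Fin K → ℝ)
    (σ2 : ℝ) : Fin K → ℝ :=
  fun i => C i * σ2 / A i i

/-- If the system `[I − diag(γ)B] p ≥ diag(γ)τ` has a strictly positive solution
`p`, then the equation `[I − diag(γ)B] p* = diag(γ)τ` has a unique solution `p*`,
which satisfies `0 < p* ≤ p` componentwise. -/
theorem unique_min_solution_of_feasible {K : ℕ} (hK : 1 ≤ K)
    (A : Matrix (Fin K) (Fin K) ℝ) (C : Fin K → ℝ) (σ2 : ℝ) (γ : Fin K → ℝ)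
    (hA : ∀ i j, 0 ≤ A i j) (hAd : ∀ i, 0 < A i i)
    (hC : ∀ i, 0 < C i) (hσ : 0 < σ2) (hγ : ∀ i, 0 < γ i)
    (p : Fin K → ℝ) (hp : ∀ i, 0 < p i)
    (hineq : ∀ i, ((Matrix.diagonal γ) *ᵥ tauVec A C σ2) i ≤
      ((1 - Matrix.diagonal γ * Bmat A) *ᵥ p) i) :
    (∃! q : Fin K → ℝ,
      (1 - Matrix.diagonal γ * Bmat A) *ᵥ q = (Matrix.diagonal γ) *ᵥ tauVec A C σ2) ∧
    ∀ q : Fin K → ℝ,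
      (1 - Matrix.diagonal γ * Bmat A) *ᵥ q = (Matrix.diagonal γ) *ᵥ tauVec A C σ2 →
      ∀ i, 0 < q i ∧ q i ≤ p i := by
  set M := Matrix.diagonal γ * Bmat A with hMdef
  set c := (Matrix.diagonal γ) *ᵥ tauVec A C σ2 with hcdef
  have hMnn : ∀ i j, 0 ≤ M i j := by
    intro i j
    rw [hMdef]
    rw [Matrix.diagonal_mul]
    rcases eq_or_ne i j with rfl | h
    · simp [Bmat]
    · simp only [Bmat, Matrix.of_apply, if_neg h]
      exact mul_nonneg (hγ i).le (div_nonneg (hA i j) (hAd i).le)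
  have hcpos : ∀ i, 0 < c i := by
    intro i
    rw [hcdef, Matrix.mulVec_diagonal]
    exact mul_pos (hγ i) (div_pos (mul_pos (hC i) hσ) (hAd i))
  -- rewrite (1 - M) *ᵥ x as x - M *ᵥ x
  have hsub : ∀ x : Fin K → ℝ, (1 - M) *ᵥ x = x - M *ᵥ x := by
    intro x
    rw [Matrix.sub_mulVec, Matrix.one_mulVec]
  have hMp : ∀ i, (M *ᵥ p) i ≤ p i - c i := by
    intro i
    have := hineq i
    rw [hsub] at this
    simp only [Pi.sub_apply] at this ⊢
    linarith
  -- key lemma: (1 - M) *ᵥ x ≥ 0 implies x ≥ 0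
  have key : ∀ x : Fin K → ℝ, (∀ i, 0 ≤ ((1 - M) *ᵥ x) i) → ∀ i, 0 ≤ x i := by
    intro x hx
    obtain ⟨i₀, -, hi₀⟩ := Finset.exists_min_image Finset.univ (fun i => x i / p i)
      ⟨⟨0, hK⟩, Finset.mem_univ _⟩
    have hmain : 0 ≤ x i₀ := by
      by_contra h
      push_neg at h
      set t : ℝ := -(x i₀ / p i₀) with htdef
      have ht : 0 < t := by
        rw [htdef]
        exact neg_pos.mpr (div_neg_of_neg_of_pos h (hp i₀))
      have hlow : ∀ j, -t * p j ≤ x j := by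
        intro j
        have h1 : x i₀ / p i₀ ≤ x j / p j := hi₀ j (Finset.mem_univ j)
        have h2 : -t ≤ x j / p j := by rw [htdef]; linarith
        calc -t * p j ≤ (x j / p j) * p j :=
              mul_le_mul_of_nonneg_right h2 (hp j).le
          _ = x j := div_mul_cancel₀ _ (hp j).ne'
      have hMx : -t * ((M *ᵥ p) i₀) ≤ (M *ᵥ x) i₀ := by
        simp only [Matrix.mulVec, dotProduct]
        rw [Finset.mul_sum]
        apply Finset.sum_le_sum
        intro j _
        have h1 := hlow j
        have h2 := hMnn i₀ j
        nlinarith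
      have hxi : x i₀ - (M *ᵥ x) i₀ ≥ 0 := by
        have := hx i₀
        rw [hsub] at this
        simpa using this
      have hflip : -t * (p i₀ - c i₀) ≤ -t * ((M *ᵥ p) i₀) := by
        have := hMp i₀
        nlinarith
      have hxeq : -t * p i₀ = x i₀ := by
        rw [htdef, neg_neg, div_mul_cancel₀ _ (hp i₀).ne']
      nlinarith [hcpos i₀]
    intro i
    have h1 : x i₀ / p i₀ ≤ x i / p i := hi₀ i (Finset.mem_univ i)
    have h2 : 0 ≤ x i₀ / p i₀ := div_nonneg hmain (hp i₀).le
    have h3 : 0 ≤ x i / p i := le_trans h2 h1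
    have := mul_le_mul_of_nonneg_right h3 (hp i).le
    rwa [zero_mul, div_mul_cancel₀ _ (hp i).ne'] at this
  -- injectivity
  have hinj : Function.Injective (fun x : Fin K → ℝ => (1 - M) *ᵥ x) := by
    intro x y hxy
    simp only at hxy
    have hd : (1 - M) *ᵥ (x - y) = 0 := by
      rw [Matrix.mulVec_sub, hxy, sub_self]
    have h1 : ∀ i, 0 ≤ (x - y) i := by
      apply key
      intro i; rw [hd]; simp
    have h2 : ∀ i, 0 ≤ (y - x) i := by
      apply key
      intro i
      have : (1 - M) *ᵥ (y - x) = 0 := by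
        rw [Matrix.mulVec_sub, hxy, sub_self]
      rw [this]; simp
    funext i
    have := h1 i
    have := h2 i
    simp only [Pi.sub_apply] at *
    linarith
  -- surjectivity via finite dimension
  have hinj' : Function.Injective ((1 - M).mulVecLin) := by
    intro x y hxy
    exact hinj (by simpa [Matrix.sub_mulVec] using hxy)
  have hsurj : Function.Surjective ((1 - M).mulVecLin) :=
    (LinearMap.injective_iff_surjective).mp hinj'
  obtain ⟨q, hq⟩ := hsurj c
  rw [Matrix.mulVecLin_apply] at hq
  have hqpos : ∀ i, 0 < q i := by
    have hqnn : ∀ i, 0 ≤ q i := by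
      apply key
      intro i; rw [hq]; exact (hcpos i).le
    intro i
    have hMq : 0 ≤ (M *ᵥ q) i := by
      simp only [Matrix.mulVec, dotProduct]
      exact Finset.sum_nonneg fun j _ => mul_nonneg (hMnn i j) (hqnn j)
    have := hq
    rw [hsub] at this
    have hi : q i - (M *ᵥ q) i = c i := congrFun this i
    have := hcpos i
    linarith
  have hqle : ∀ i, q i ≤ p i := by
    have hpq : ∀ i, 0 ≤ (p - q) i := by
      apply key
      intro i
      rw [Matrix.mulVec_sub, hq]
      simp only [Pi.sub_apply]
      have := hineq i
      linarith
    intro i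
    have := hpq i
    simp only [Pi.sub_apply] at this
    linarith
  refine ⟨⟨q, hq, fun y hy => hinj (show (1 - M) *ᵥ y = (1 - M) *ᵥ q by rw [hy, hq])⟩, ?_⟩
  intro r hr i
  have : r = q := hinj (show (1 - M) *ᵥ r = (1 - M) *ᵥ q by rw [hr, hq])
  subst this
  exact ⟨hqpos i, hqle i⟩
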